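/- Let (ω,Σ) be a weight system on a finite player set N and let G=(N,E) be a graph preserving (ω,Σ)-convexity. Let C be a cycle in G and let j be a vertex of C whose priority equals the maximal priority among the vertices of C, i.e., p(j) = p(V(C)). If i and k are the two neighbors of j on the cycle C, then {i,k} ∈ E. -/

import Mathlib

open Finset

variable {α : Type*}

noncomputable section

open scoped Classical

/-- `ω̄^S_i`: the weight of `i` if `i` belongs to the top-priority part `S̄` of `S`, else `0`.
Here the ordered partition `Σ` is encoded by the priority function `p`. -/
def wbar [DecidableEq α] (ω : α → ℝ) (p : α → ℕ) (S : Finset α) (i : α) : ℝ :=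
  if i ∈ S ∧ p i = S.sup p then ω i else 0

/-- `(ω,Σ)`-convexity of a TU-game `v`. -/
def WConvex [DecidableEq α] (ω : α → ℝ) (p : α → ℕ) (v : Finset α → ℝ) : Prop :=
  ∀ S T : Finset α, S ⊂ T →
    0 ≤ ∑ i ∈ S, wbar ω p T i * (v T - v (T.erase i) - v S + v (S.erase i))

/-- The connected component of `i` in the subgraph of `G` induced by `S`. -/
def compOf [Fintype α] (G : SimpleGraph α) (S : Finset α) (i : α) : Finset α :=
  S.filter fun j => Relation.ReflTransGen (fun a b => a ∈ S ∧ b ∈ S ∧ G.Adj a b) i j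

/-- The communication game `v^G`: `v^G(S)` is the sum of `v` over the (vertex sets of the)
connected components of the subgraph of `G` induced by `S`. -/
def commGame [Fintype α] [DecidableEq α] (G : SimpleGraph α)
    (v : Finset α → ℝ) (S : Finset α) : ℝ :=
  ∑ A ∈ S.image (compOf G S), v A

/-- `G` preserves `(ω,Σ)`-convexity. -/
def Preserves [Fintype α] [DecidableEq α] (G : SimpleGraph α)
    (ω : α → ℝ) (p : α → ℕ) : Prop :=
  ∀ v : Finset α → ℝ, v ∅ = 0 → WConvex ω p v → WConvex ω p (commGame G v)

/-! ### Auxiliary lemmas -/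

lemma mem_compOf [Fintype α] [DecidableEq α] {G : SimpleGraph α} {S : Finset α} {i x : α} :
    x ∈ compOf G S i ↔ x ∈ S ∧
      Relation.ReflTransGen (fun a b => a ∈ S ∧ b ∈ S ∧ G.Adj a b) i x := by
  simp [compOf]

lemma rel_symm [Fintype α] (G : SimpleGraph α) (S : Finset α) :
    Symmetric (fun a b => a ∈ S ∧ b ∈ S ∧ G.Adj a b) :=
  fun _ _ ⟨h1, h2, h3⟩ => ⟨h2, h1, h3.symm⟩

lemma compOf_eq_of_reach [Fintype α] [DecidableEq α] {G : SimpleGraph α} {S : Finset α} {x y : α}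
    (h : Relation.ReflTransGen (fun a b => a ∈ S ∧ b ∈ S ∧ G.Adj a b) x y) :
    compOf G S x = compOf G S y := by
  ext z
  simp only [mem_compOf]
  constructor
  · rintro ⟨hz, hr⟩
    exact ⟨hz, (by haveI : Std.Symm (fun a b : α => a ∈ S ∧ b ∈ S ∧ G.Adj a b) := ⟨fun a b h => rel_symm G S h⟩; exact Std.Symm.symm _ _ h : Relation.ReflTransGen (fun a b => a ∈ S ∧ b ∈ S ∧ G.Adj a b) y x).trans hr⟩
  · rintro ⟨hz, hr⟩
    exact ⟨hz, h.trans hr⟩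

lemma support_getElem? {V : Type*} {G : SimpleGraph V} {u v : V}
    (w : G.Walk u v) {n : ℕ} (hn : n ≤ w.length) :
    w.support[n]? = some (w.getVert n) := by
  induction w generalizing n with
  | nil =>
    have : n = 0 := by simpa using hn
    subst this
    simp [SimpleGraph.Walk.getVert]
  | cons h q ih =>
    cases n with
    | zero => simp [SimpleGraph.Walk.getVert]
    | succ n =>
      have hn' : n ≤ q.length := by
        simpa [Nat.succ_le_succ_iff] using hn
      simpa [SimpleGraph.Walk.support_cons, SimpleGraph.Walk.getVert_cons_succ] using ih hn'

lemma cycle_getVert_ne {G : SimpleGraph α} {j : α} {c : G.Walk j j} (hc : c.IsCycle)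
    {n m : ℕ} (hn : 1 ≤ n) (hnm : n < m) (hm : m ≤ c.length) :
    c.getVert n ≠ c.getVert m := by
  intro h
  obtain ⟨n', rfl⟩ : ∃ n', n = n' + 1 := ⟨n - 1, by omega⟩
  obtain ⟨m', rfl⟩ : ∃ m', m = m' + 1 := ⟨m - 1, by omega⟩
  have h1 := support_getElem? c (show n' + 1 ≤ c.length by omega)
  have h2 := support_getElem? c (show m' + 1 ≤ c.length by omega)
  rw [c.support_eq_cons, List.getElem?_cons_succ] at h1 h2
  have hlen : c.support.tail.length = c.length := by
    have := c.length_support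
    simp [List.length_tail, this]
  have := List.getElem?_inj (by omega : n' < c.support.tail.length) hc.support_nodup
      |>.mp (h1.trans (by rw [h, ← h2]))
  omega

lemma wconvex_pair [DecidableEq α] (ω : α → ℝ) (hω : ∀ i, 0 < ω i) (p : α → ℕ)
    (i k : α) :
    WConvex ω p (fun B => if i ∈ B ∧ k ∈ B then (1 : ℝ) else 0) := by
  intro S T hST
  apply Finset.sum_nonneg
  intro l _
  apply mul_nonneg
  · unfold wbar
    split_ifs
    · exact (hω l).le
    · exact le_rfl
  · have hsub : S ⊆ T := hST.subset
    by_cases hS : i ∈ S ∧ k ∈ S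
    · have hT : i ∈ T ∧ k ∈ T := ⟨hsub hS.1, hsub hS.2⟩
      by_cases hSl : i ∈ S.erase l ∧ k ∈ S.erase l
      · have hTl : i ∈ T.erase l ∧ k ∈ T.erase l :=
          ⟨Finset.mem_erase.mpr ⟨(Finset.mem_erase.mp hSl.1).1, hT.1⟩,
           Finset.mem_erase.mpr ⟨(Finset.mem_erase.mp hSl.2).1, hT.2⟩⟩
        simp only [if_pos hS, if_pos hSl, if_pos hT, if_pos hTl]
        norm_num
      · have hl : l = i ∨ l = k := by
          by_contra hcon
          push_neg at hcon
          exact hSl ⟨Finset.mem_erase.mpr ⟨hcon.1.symm, hS.1⟩,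
            Finset.mem_erase.mpr ⟨hcon.2.symm, hS.2⟩⟩
        have hTl : ¬(i ∈ T.erase l ∧ k ∈ T.erase l) := by
          rcases hl with rfl | rfl
          · exact fun h => (Finset.mem_erase.mp h.1).1 rfl
          · exact fun h => (Finset.mem_erase.mp h.2).1 rfl
        simp only [if_pos hS, if_neg hSl, if_pos hT, if_neg hTl]
        norm_num
    · have hSl : ¬(i ∈ S.erase l ∧ k ∈ S.erase l) := fun h =>
        hS ⟨Finset.erase_subset _ _ h.1, Finset.erase_subset _ _ h.2⟩
      simp only [if_neg hS, if_neg hSl]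
      by_cases hTl : i ∈ T.erase l ∧ k ∈ T.erase l
      · have hT : i ∈ T ∧ k ∈ T :=
          ⟨Finset.erase_subset _ _ hTl.1, Finset.erase_subset _ _ hTl.2⟩
        simp only [if_pos hT, if_pos hTl]
        norm_num
      · by_cases hT : i ∈ T ∧ k ∈ T
        · simp only [if_pos hT, if_neg hTl]
          norm_num
        · simp only [if_neg hT, if_neg hTl]
          norm_num

lemma commGame_pair [Fintype α] [DecidableEq α] (G : SimpleGraph α) {i k : α} (hik : i ≠ k)
    (A : Finset α) :
    commGame G (fun B => if i ∈ B ∧ k ∈ B then (1 : ℝ) else 0) A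
      = if k ∈ compOf G A i then 1 else 0 := by
  unfold commGame
  by_cases h : k ∈ compOf G A i
  · rw [if_pos h]
    obtain ⟨hkA, hr⟩ := mem_compOf.mp h
    have hiA : i ∈ A := by
      rcases hr.cases_head with heq | ⟨b, ⟨hb1, _, _⟩, _⟩
      · exact absurd heq hik
      · exact hb1
    have hmem : compOf G A i ∈ A.image (compOf G A) := Finset.mem_image_of_mem _ hiA
    rw [Finset.sum_eq_single_of_mem _ hmem]
    · rw [if_pos ⟨mem_compOf.mpr ⟨hiA, Relation.ReflTransGen.refl⟩, h⟩]
    · rintro B hB hne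
      obtain ⟨x, hx, rfl⟩ := Finset.mem_image.mp hB
      rw [if_neg]
      rintro ⟨h1, _⟩
      exact hne (compOf_eq_of_reach (mem_compOf.mp h1).2)
  · rw [if_neg h]
    apply Finset.sum_eq_zero
    intro B hB
    obtain ⟨x, hx, rfl⟩ := Finset.mem_image.mp hB
    rw [if_neg]
    rintro ⟨h1, h2⟩
    obtain ⟨hiA', hri⟩ := mem_compOf.mp h1
    obtain ⟨hkA', hrk⟩ := mem_compOf.mp h2
    exact h (mem_compOf.mpr
      ⟨hkA', (by haveI : Std.Symm (fun a b : α => a ∈ A ∧ b ∈ A ∧ G.Adj a b) := ⟨fun a b h => rel_symm G A h⟩; exact Std.Symm.symm _ _ hri : Relation.ReflTransGen (fun a b => a ∈ A ∧ b ∈ A ∧ G.Adj a b) i x).trans hrk⟩)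

/-- If `G` preserves `(ω,Σ)`-convexity, `c` is a cycle through `j` (based at `j`), and `j` has
maximal priority among the vertices of the cycle, then the two neighbors of `j` on the cycle
(namely `c.getVert 1` and `c.getVert (c.length - 1)`) are adjacent in `G`. -/
theorem neighbors_of_max_priority_vertex_on_cycle_adjacent [Fintype α] [DecidableEq α]
    (ω : α → ℝ) (hω : ∀ i, 0 < ω i) (p : α → ℕ) (hp : ∀ i, 1 ≤ p i)
    (G : SimpleGraph α) (hpres : Preserves G ω p)
    (j : α) (c : G.Walk j j) (hc : c.IsCycle)
    (hmax : ∀ x ∈ c.support, p x ≤ p j) :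
    G.Adj (c.getVert 1) (c.getVert (c.length - 1)) := by
  have hlen3 := hc.three_le_length
  by_cases hL : c.length = 3
  · have h12 := c.adj_getVert_succ (show 1 < c.length by omega)
    have he : c.length - 1 = 1 + 1 := by omega
    rw [he]
    exact h12
  · have hlen4 : 4 ≤ c.length := by omega
    by_contra hne
    set i : α := c.getVert 1 with hi_def
    set k : α := c.getVert (c.length - 1) with hk_def
    set T : Finset α := c.support.toFinset with hT_def
    set S : Finset α := insert i (insert j {k}) with hS_def
    have hadj_ji : G.Adj j i := by
      have h0 := c.adj_getVert_succ (show 0 < c.length by omega)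
      rwa [c.getVert_zero] at h0
    have hadj_kj : G.Adj k j := by
      have h0 := c.adj_getVert_succ (show c.length - 1 < c.length by omega)
      have he : c.length - 1 + 1 = c.length := by omega
      rw [he, c.getVert_length] at h0
      exact h0
    have hij : i ≠ j := hadj_ji.ne'
    have hkj : k ≠ j := hadj_kj.ne
    have hik : i ≠ k := cycle_getVert_ne hc le_rfl (by omega) (by omega)
    have hmemT : ∀ n, n ≤ c.length → c.getVert n ∈ T := fun n hn =>
      List.mem_toFinset.mpr (SimpleGraph.Walk.mem_support_iff_exists_getVert.mpr ⟨n, rfl, hn⟩)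
    have hiT : i ∈ T := hmemT 1 (by omega)
    have hkT : k ∈ T := hmemT (c.length - 1) (by omega)
    have hjT : j ∈ T := List.mem_toFinset.mpr c.start_mem_support
    have hST : S ⊂ T := by
      constructor
      · intro x hx
        simp only [hS_def, Finset.mem_insert, Finset.mem_singleton] at hx
        rcases hx with rfl | rfl | rfl
        exacts [hiT, hjT, hkT]
      · intro hTS
        have h2T := hTS (hmemT 2 (by omega))
        simp only [hS_def, Finset.mem_insert, Finset.mem_singleton] at h2T
        rcases h2T with h' | h' | h'
        · exact cycle_getVert_ne hc le_rfl (by omega) (by omega) h'.symm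
        · exact cycle_getVert_ne hc (by norm_num) (show 2 < c.length by omega) le_rfl
            (h'.trans c.getVert_length.symm)
        · exact cycle_getVert_ne hc (by norm_num) (show 2 < c.length - 1 by omega) (by omega) h'
    have hsup : T.sup p = p j :=
      le_antisymm (Finset.sup_le fun x hx => hmax x (List.mem_toFinset.mp hx))
        (Finset.le_sup hjT)
    set v : Finset α → ℝ := fun B => if i ∈ B ∧ k ∈ B then 1 else 0 with hv_def
    have hv0 : v ∅ = 0 := by simp [hv_def]
    have hconv : WConvex ω p (commGame G v) := by
      refine hpres v hv0 ?_
      rw [hv_def]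
      exact wconvex_pair ω hω p i k
    have hsum := hconv S T hST
    have hcg : ∀ A, commGame G v A = if k ∈ compOf G A i then 1 else 0 := by
      intro A
      rw [hv_def]
      exact commGame_pair G hik A
    -- reach facts
    have hreachT : k ∈ compOf G T i := mem_compOf.mpr ⟨hkT,
      Relation.ReflTransGen.head ⟨hiT, hjT, hadj_ji.symm⟩
        (Relation.ReflTransGen.single ⟨hjT, hkT, hadj_kj.symm⟩)⟩
    have hmemTj : ∀ m, 1 ≤ m → m ≤ c.length - 1 → c.getVert m ∈ T.erase j := by
      intro m h1 h2
      refine Finset.mem_erase.mpr ⟨?_, hmemT m (by omega)⟩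
      have hne' := cycle_getVert_ne hc h1 (show m < c.length by omega) le_rfl
      rwa [c.getVert_length] at hne'
    have hreachTj : ∀ n, 1 ≤ n → n ≤ c.length - 1 →
        Relation.ReflTransGen
          (fun a b => a ∈ T.erase j ∧ b ∈ T.erase j ∧ G.Adj a b) i (c.getVert n) := by
      intro n
      induction n with
      | zero => omega
      | succ n ih =>
        intro _ h2
        rcases Nat.eq_zero_or_pos n with rfl | hpos
        · rw [show (0 + 1 : ℕ) = 1 from rfl, ← hi_def]
        · exact (ih hpos (by omega)).tail
            ⟨hmemTj n hpos (by omega), hmemTj (n + 1) (by omega) h2,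
              c.adj_getVert_succ (by omega)⟩
    have hreachTj' : k ∈ compOf G (T.erase j) i := mem_compOf.mpr
      ⟨Finset.mem_erase.mpr ⟨hkj, hkT⟩, by
        have := hreachTj (c.length - 1) (by omega) le_rfl
        rwa [← hk_def] at this⟩
    have hiS : i ∈ S := by simp [hS_def]
    have hjS : j ∈ S := by simp [hS_def]
    have hkS : k ∈ S := by simp [hS_def]
    have hreachS : k ∈ compOf G S i := mem_compOf.mpr ⟨hkS,
      Relation.ReflTransGen.head ⟨hiS, hjS, hadj_ji.symm⟩
        (Relation.ReflTransGen.single ⟨hjS, hkS, hadj_kj.symm⟩)⟩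
    have hnoTi : k ∉ compOf G (T.erase i) i := by
      intro hmem
      rcases (mem_compOf.mp hmem).2.cases_head with heq | ⟨b, ⟨hb1, _, _⟩, _⟩
      · exact hik heq
      · exact (Finset.mem_erase.mp hb1).1 rfl
    have hnoA : ∀ A : Finset α, k ∉ A → k ∉ compOf G A i := fun A hA hmem =>
      hA (mem_compOf.mp hmem).1
    have hnoTk : k ∉ compOf G (T.erase k) i := hnoA _ (Finset.notMem_erase k T)
    have hnoSk : k ∉ compOf G (S.erase k) i := hnoA _ (Finset.notMem_erase k S)
    have hnoSi : k ∉ compOf G (S.erase i) i := by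
      intro hmem
      rcases (mem_compOf.mp hmem).2.cases_head with heq | ⟨b, ⟨hb1, _, _⟩, _⟩
      · exact hik heq
      · exact (Finset.mem_erase.mp hb1).1 rfl
    have hnoSj : k ∉ compOf G (S.erase j) i := by
      intro hmem
      rcases (mem_compOf.mp hmem).2.cases_head with heq | ⟨b, ⟨_, hb2, hadj⟩, _⟩
      · exact hik heq
      · have hbS := Finset.mem_erase.mp hb2
        have hbS' := hbS.2
        simp only [hS_def, Finset.mem_insert, Finset.mem_singleton] at hbS'
        rcases hbS' with rfl | rfl | rfl
        · exact hadj.ne rfl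
        · exact hbS.1 rfl
        · exact hne hadj
    -- evaluate the eight commGame values
    have e1 : commGame G v T = 1 := by rw [hcg]; exact if_pos hreachT
    have e2 : commGame G v (T.erase i) = 0 := by rw [hcg]; exact if_neg hnoTi
    have e3 : commGame G v (T.erase j) = 1 := by rw [hcg]; exact if_pos hreachTj'
    have e4 : commGame G v (T.erase k) = 0 := by rw [hcg]; exact if_neg hnoTk
    have e5 : commGame G v S = 1 := by rw [hcg]; exact if_pos hreachS
    have e6 : commGame G v (S.erase i) = 0 := by rw [hcg]; exact if_neg hnoSi
    have e7 : commGame G v (S.erase j) = 0 := by rw [hcg]; exact if_neg hnoSj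
    have e8 : commGame G v (S.erase k) = 0 := by rw [hcg]; exact if_neg hnoSk
    have hwj : wbar ω p T j = ω j := if_pos ⟨hjT, hsup.symm⟩
    rw [hS_def] at hsum
    rw [Finset.sum_insert (by simp [hij, hik]),
        Finset.sum_insert (by simpa using hkj.symm), Finset.sum_singleton] at hsum
    rw [← hS_def] at hsum
    rw [e1, e2, e3, e4, e5, e6, e7, e8, hwj] at hsum
    norm_num at hsum
    linarith [hω j, hsum]

end
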